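/- Let t₀ > 0, 1 ≤ p̃ < ∞, and let v : [0, t₀] → L_{p̃}(ℝ^{n+1}) be continuous (with respect to the L_{p̃}-norm). Then for every η > 0 there exists ρ > 0 such that for every continuous function g : [0, t₀] × ℝⁿ → ℝ with sup_{(t,x)} |g(t,x)| < ρ one has sup_{t ∈ [0, t₀]} ‖ v(t)(·, · − g(t, ·)) − v(t)(·, ·) ‖_{L_{p̃}(ℝ^{n+1})} ≤ η, where v(t)(x, y − g(t,x)) denotes the composition of v(t) with the shear map (x, y) ↦ (x, y − g(t, x)). -/

import Mathlib

open MeasureTheory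
open scoped ENNReal

set_option maxHeartbeats 1000000

/-- The shear map `(x, y) ↦ (x, y - h x)` is measure preserving on `ℝⁿ × ℝ`. -/
lemma shear_measurePreserving {n : ℕ} (h : EuclideanSpace ℝ (Fin n) → ℝ)
    (hm : Measurable h) :
    MeasurePreserving (fun q : EuclideanSpace ℝ (Fin n) × ℝ => (q.1, q.2 - h q.1))
      volume volume := by
  rw [MeasureTheory.Measure.volume_eq_prod]
  exact (MeasurePreserving.id volume).skew_product (g := fun a y => y - h a)
    (measurable_snd.sub (hm.comp measurable_fst))
    (Filter.Eventually.of_forall fun a =>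
      (measurePreserving_sub_right volume (h a)).map_eq)

/-- Smallness of the shear difference for a continuous compactly supported function. -/
lemma shear_small {n : ℕ} (p : ℝ≥0∞) (hp0 : p ≠ 0) (hp2 : p ≠ ⊤)
    (φ : EuclideanSpace ℝ (Fin n) × ℝ → ℝ) (hφc : Continuous φ) (hφs : HasCompactSupport φ)
    {ε : ℝ} (hε : 0 < ε) :
    ∃ ρ > (0 : ℝ), ∀ h : EuclideanSpace ℝ (Fin n) → ℝ, Continuous h →
      (∀ x, |h x| < ρ) →
      eLpNorm (fun q : EuclideanSpace ℝ (Fin n) × ℝ => φ (q.1, q.2 - h q.1) - φ q) p volume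
        ≤ ENNReal.ofReal ε := by
  -- the support is contained in some closed ball
  obtain ⟨R, hR⟩ := (hφs.isBounded).subset_closedBall (0 : EuclideanSpace ℝ (Fin n) × ℝ)
  set S : Set (EuclideanSpace ℝ (Fin n) × ℝ) := Metric.closedBall 0 (R + 1) with hS
  have hScompact : IsCompact S := isCompact_closedBall _ _
  have hSfin : volume S < ⊤ := hScompact.measure_lt_top
  set M : ℝ≥0∞ := volume S ^ (1 / p.toReal) with hM
  have hMfin : M ≠ ⊤ := by
    apply ENNReal.rpow_ne_top_of_nonneg (by positivity) hSfin.ne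
  set c : ℝ := ε / (M.toReal + 1) with hc
  have hMnonneg : 0 ≤ M.toReal := ENNReal.toReal_nonneg
  have hc0 : 0 < c := by positivity
  -- uniform continuity
  have hφu : UniformContinuous φ := hφs.uniformContinuous_of_continuous hφc
  rw [Metric.uniformContinuous_iff] at hφu
  obtain ⟨δ, hδ0, hδ⟩ := hφu c hc0
  refine ⟨min δ 1, lt_min hδ0 one_pos, fun h hcont hsmall => ?_⟩
  set f : EuclideanSpace ℝ (Fin n) × ℝ → ℝ := fun q => φ (q.1, q.2 - h q.1) - φ q with hf
  -- pointwise bound by indicator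
  have hbound : ∀ q, ‖f q‖ ≤ ‖S.indicator (fun _ => c) q‖ := by
    intro q
    by_cases hq : q ∈ S
    · rw [Set.indicator_of_mem hq]
      have hd : dist (q.1, q.2 - h q.1) q < δ := by
        rw [Prod.dist_eq]
        simp only [dist_self]
        have : dist (q.2 - h q.1) q.2 = |h q.1| := by
          rw [Real.dist_eq, sub_sub_cancel_left, abs_neg]
        rw [this]
        exact max_lt hδ0 (lt_of_lt_of_le (hsmall q.1) (min_le_left _ _))
      have := hδ hd
      rw [Real.dist_eq] at this
      rw [Real.norm_eq_abs, Real.norm_eq_abs]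
      calc |f q| ≤ c := le_of_lt this
        _ ≤ |c| := le_abs_self c
    · rw [Set.indicator_of_notMem hq]
      have hq' : R + 1 < ‖q‖ := by
        simpa [S, Metric.mem_closedBall, dist_zero_right, not_le] using hq
      have h1 : φ q = 0 := by
        apply image_eq_zero_of_notMem_tsupport
        intro hmem
        have := hR hmem
        rw [Metric.mem_closedBall, dist_zero_right] at this
        linarith
      have h2 : φ (q.1, q.2 - h q.1) = 0 := by
        apply image_eq_zero_of_notMem_tsupport
        intro hmem
        have h3 : ‖(q.1, q.2 - h q.1)‖ ≤ R := by
          have := hR hmem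
          rwa [Metric.mem_closedBall, dist_zero_right] at this
        have h4 : ‖q - (q.1, q.2 - h q.1)‖ ≤ 1 := by
          have : q - (q.1, q.2 - h q.1) = ((0 : EuclideanSpace ℝ (Fin n)), h q.1) := by
            ext <;> simp
          rw [this, Prod.norm_def]
          simp only [norm_zero]
          rw [max_le_iff]
          constructor
          · linarith
          · rw [Real.norm_eq_abs]
            exact le_of_lt (lt_of_lt_of_le (hsmall q.1) (min_le_right _ _))
        have := norm_sub_norm_le q (q.1, q.2 - h q.1)
        simp only [norm_zero, f] at *
        linarith
      simp [hf, h1, h2]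
  calc eLpNorm f p volume ≤ eLpNorm (S.indicator (fun _ => c)) p volume :=
        eLpNorm_mono hbound
    _ = ‖c‖₊ * volume S ^ (1 / p.toReal) :=
        eLpNorm_indicator_const hScompact.measurableSet hp0 hp2
    _ = ENNReal.ofReal c * M := by
        rw [hM]
        congr 1
        exact Real.enorm_eq_ofReal hc0.le
    _ ≤ ENNReal.ofReal ε := by
        rw [← ENNReal.ofReal_toReal hMfin, ← ENNReal.ofReal_mul hc0.le]
        apply ENNReal.ofReal_le_ofReal
        rw [hc, div_mul_eq_mul_div, div_le_iff₀ (by positivity)]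
        nlinarith

theorem stmt_15 (n : ℕ) (t₀ : ℝ) (ht₀ : 0 < t₀) (p : ℝ≥0∞) (hp1 : 1 ≤ p) (hp2 : p ≠ ⊤)
    (v : ℝ → EuclideanSpace ℝ (Fin n) × ℝ → ℝ)
    (hv_mem : ∀ t ∈ Set.Icc (0 : ℝ) t₀, MemLp (v t) p volume)
    (hv_cont : ∀ t ∈ Set.Icc (0 : ℝ) t₀, ∀ η > (0 : ℝ), ∃ ζ > (0 : ℝ),
      ∀ s ∈ Set.Icc (0 : ℝ) t₀, |s - t| < ζ →
        eLpNorm (fun q : EuclideanSpace ℝ (Fin n) × ℝ => v s q - v t q) p volume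
          ≤ ENNReal.ofReal η) :
    ∀ η > (0 : ℝ), ∃ ρ > (0 : ℝ), ∀ g : ℝ → EuclideanSpace ℝ (Fin n) → ℝ,
      Continuous (fun q : ℝ × EuclideanSpace ℝ (Fin n) => g q.1 q.2) →
      (∀ t x, |g t x| < ρ) →
      ∀ t ∈ Set.Icc (0 : ℝ) t₀,
        eLpNorm (fun q : EuclideanSpace ℝ (Fin n) × ℝ =>
            v t (q.1, q.2 - g t q.1) - v t q) p volume
          ≤ ENNReal.ofReal η := by
  intro η hη
  have hp0 : p ≠ 0 := fun h => by simp [h] at hp1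
  have hε : (0 : ℝ) < η / 5 := by linarith
  -- choose moduli of continuity
  have hζ' : ∀ i : Set.Icc (0 : ℝ) t₀, ∃ ζ > (0 : ℝ),
      ∀ s ∈ Set.Icc (0 : ℝ) t₀, |s - (i : ℝ)| < ζ →
        eLpNorm (fun q : EuclideanSpace ℝ (Fin n) × ℝ => v s q - v (i : ℝ) q) p volume
          ≤ ENNReal.ofReal (η / 5) :=
    fun i => hv_cont i i.2 _ hε
  choose ζ hζ0 hζ using hζ'
  -- finite subcover
  obtain ⟨s, hcover⟩ := isCompact_Icc.elim_finite_subcover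
    (fun i : Set.Icc (0 : ℝ) t₀ => Metric.ball (i : ℝ) (ζ i))
    (fun i => Metric.isOpen_ball)
    (fun x hx => Set.mem_iUnion.2 ⟨⟨x, hx⟩, Metric.mem_ball_self (hζ0 ⟨x, hx⟩)⟩)
  -- approximate by continuous compactly supported functions
  have hφ' : ∀ i : Set.Icc (0 : ℝ) t₀, ∃ φ : EuclideanSpace ℝ (Fin n) × ℝ → ℝ,
      HasCompactSupport φ ∧
      eLpNorm (v (i : ℝ) - φ) p volume ≤ ENNReal.ofReal (η / 5) ∧ Continuous φ ∧
      MemLp φ p volume :=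
    fun i => (hv_mem i i.2).exists_hasCompactSupport_eLpNorm_sub_le hp2
      (by simp [ENNReal.ofReal_eq_zero, not_le, hε])
  choose φ hφs hφclose hφc hφmem using hφ'
  -- choose shear radii
  have hρ' : ∀ i : Set.Icc (0 : ℝ) t₀, ∃ ρ > (0 : ℝ),
      ∀ h : EuclideanSpace ℝ (Fin n) → ℝ, Continuous h → (∀ x, |h x| < ρ) →
      eLpNorm (fun q : EuclideanSpace ℝ (Fin n) × ℝ => φ i (q.1, q.2 - h q.1) - φ i q) p volume
        ≤ ENNReal.ofReal (η / 5) :=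
    fun i => shear_small p hp0 hp2 (φ i) (hφc i) (hφs i) hε
  choose ρ hρ0 hρ using hρ'
  -- s is nonempty
  have h0mem : (0 : ℝ) ∈ Set.Icc (0 : ℝ) t₀ := ⟨le_refl _, ht₀.le⟩
  obtain ⟨i₀, hi₀s, _⟩ := Set.mem_iUnion₂.1 (hcover h0mem)
  have hsne : s.Nonempty := ⟨i₀, hi₀s⟩
  refine ⟨s.inf' hsne ρ, ?_, ?_⟩
  · obtain ⟨j, hjs, hjeq⟩ := s.exists_mem_eq_inf' hsne ρ
    rw [hjeq]; exact hρ0 j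
  intro g hgcont hgsmall t ht
  obtain ⟨i, his, hti⟩ := Set.mem_iUnion₂.1 (hcover ht)
  have hti' : |t - (i : ℝ)| < ζ i := by
    rw [Metric.mem_ball, Real.dist_eq] at hti
    exact hti
  have hgt_small : ∀ x, |g t x| < ρ i := fun x =>
    lt_of_lt_of_le (hgsmall t x) ((Finset.inf'_le ρ his))
  have hgt_cont : Continuous (g t) := hgcont.comp (Continuous.prodMk_right t)
  set T : EuclideanSpace ℝ (Fin n) × ℝ → EuclideanSpace ℝ (Fin n) × ℝ :=
    fun q => (q.1, q.2 - g t q.1) with hT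
  have hTmp : MeasurePreserving T volume volume :=
    shear_measurePreserving (g t) hgt_cont.measurable
  -- measurability facts
  have hvt : AEStronglyMeasurable (v t) volume := (hv_mem t ht).aestronglyMeasurable
  have hvi : AEStronglyMeasurable (v (i : ℝ)) volume := (hv_mem i i.2).aestronglyMeasurable
  have hφi : AEStronglyMeasurable (φ i) volume := (hφc i).aestronglyMeasurable
  have hvtT : AEStronglyMeasurable (fun q => v t (T q)) volume :=
    hvt.comp_quasiMeasurePreserving hTmp.quasiMeasurePreserving
  have hviT : AEStronglyMeasurable (fun q => v (i : ℝ) (T q)) volume :=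
    hvi.comp_quasiMeasurePreserving hTmp.quasiMeasurePreserving
  have hφiT : AEStronglyMeasurable (fun q => φ i (T q)) volume :=
    hφi.comp_quasiMeasurePreserving hTmp.quasiMeasurePreserving
  -- the five pieces
  set f₁ : EuclideanSpace ℝ (Fin n) × ℝ → ℝ := fun q => v t (T q) - v (i : ℝ) (T q)
  set f₂ : EuclideanSpace ℝ (Fin n) × ℝ → ℝ := fun q => v (i : ℝ) (T q) - φ i (T q)
  set f₃ : EuclideanSpace ℝ (Fin n) × ℝ → ℝ := fun q => φ i (T q) - φ i q
  set f₄ : EuclideanSpace ℝ (Fin n) × ℝ → ℝ := fun q => φ i q - v (i : ℝ) q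
  set f₅ : EuclideanSpace ℝ (Fin n) × ℝ → ℝ := fun q => v (i : ℝ) q - v t q
  have hdecomp : (fun q : EuclideanSpace ℝ (Fin n) × ℝ =>
      v t (q.1, q.2 - g t q.1) - v t q) = f₁ + f₂ + f₃ + f₄ + f₅ := by
    funext q
    simp only [f₁, f₂, f₃, f₄, f₅, Pi.add_apply, hT]
    ring
  have h1m : AEStronglyMeasurable f₁ volume := hvtT.sub hviT
  have h2m : AEStronglyMeasurable f₂ volume := hviT.sub hφiT
  have h3m : AEStronglyMeasurable f₃ volume := hφiT.sub hφi
  have h4m : AEStronglyMeasurable f₄ volume := hφi.sub hvi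
  have h5m : AEStronglyMeasurable f₅ volume := hvi.sub hvt
  -- bounds on the five pieces
  have hb1 : eLpNorm f₁ p volume ≤ ENNReal.ofReal (η / 5) := by
    have : eLpNorm f₁ p volume
        = eLpNorm (fun q : EuclideanSpace ℝ (Fin n) × ℝ => v t q - v (i : ℝ) q) p volume :=
      eLpNorm_comp_measurePreserving (g := fun q : EuclideanSpace ℝ (Fin n) × ℝ =>
        v t q - v (i : ℝ) q) (hvt.sub hvi) hTmp
    rw [this]
    exact hζ i t ht hti'
  have hb2 : eLpNorm f₂ p volume ≤ ENNReal.ofReal (η / 5) := by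
    have heq : eLpNorm f₂ p volume
        = eLpNorm (fun q : EuclideanSpace ℝ (Fin n) × ℝ => v (i : ℝ) q - φ i q) p volume :=
      eLpNorm_comp_measurePreserving (g := fun q : EuclideanSpace ℝ (Fin n) × ℝ =>
        v (i : ℝ) q - φ i q) (hvi.sub hφi) hTmp
    rw [heq]
    exact hφclose i
  have hb3 : eLpNorm f₃ p volume ≤ ENNReal.ofReal (η / 5) :=
    hρ i (g t) hgt_cont hgt_small
  have hb4 : eLpNorm f₄ p volume ≤ ENNReal.ofReal (η / 5) := by
    have : eLpNorm f₄ p volume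
        = eLpNorm (v (i : ℝ) - φ i) p volume := by
      rw [← eLpNorm_neg]
      congr 1
      funext q
      simp [f₄]
    rw [this]
    exact hφclose i
  have hb5 : eLpNorm f₅ p volume ≤ ENNReal.ofReal (η / 5) := by
    have : eLpNorm f₅ p volume
        = eLpNorm (fun q : EuclideanSpace ℝ (Fin n) × ℝ => v t q - v (i : ℝ) q) p volume := by
      rw [← eLpNorm_neg]
      congr 1
      funext q
      simp [f₅]
    rw [this]
    exact hζ i t ht hti'
  -- assemble
  rw [hdecomp]
  calc eLpNorm (f₁ + f₂ + f₃ + f₄ + f₅) p volume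
      ≤ eLpNorm (f₁ + f₂ + f₃ + f₄) p volume + eLpNorm f₅ p volume :=
        eLpNorm_add_le ((((h1m.add h2m).add h3m).add h4m)) h5m hp1
    _ ≤ (eLpNorm (f₁ + f₂ + f₃) p volume + eLpNorm f₄ p volume) + eLpNorm f₅ p volume := by
        gcongr
        exact eLpNorm_add_le ((h1m.add h2m).add h3m) h4m hp1
    _ ≤ ((eLpNorm (f₁ + f₂) p volume + eLpNorm f₃ p volume) + eLpNorm f₄ p volume)
          + eLpNorm f₅ p volume := by
        gcongr
        exact eLpNorm_add_le (h1m.add h2m) h3m hp1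
    _ ≤ (((eLpNorm f₁ p volume + eLpNorm f₂ p volume) + eLpNorm f₃ p volume)
          + eLpNorm f₄ p volume) + eLpNorm f₅ p volume := by
        gcongr
        exact eLpNorm_add_le h1m h2m hp1
    _ ≤ (((ENNReal.ofReal (η / 5) + ENNReal.ofReal (η / 5)) + ENNReal.ofReal (η / 5))
          + ENNReal.ofReal (η / 5)) + ENNReal.ofReal (η / 5) := by
        gcongr
    _ = ENNReal.ofReal η := by
        rw [← ENNReal.ofReal_add hε.le hε.le, ← ENNReal.ofReal_add (by linarith) hε.le,
          ← ENNReal.ofReal_add (by linarith) hε.le, ← ENNReal.ofReal_add (by linarith) hε.le]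
        congr 1
        ring
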